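/- arXiv:2601.21227 — 4 statements merged into one kernel-verified Lean document; each statement's English description precedes it below -/
import Mathlib

section
/- Let θ, k : ℝ → ℝ satisfy θ' = k, and define T(s) = (-sin θ(s), cos θ(s)), N(s) = (-cos θ(s), -sin θ(s)), and F(s) = (1/2)k(s)² • T(s) + k'(s) • N(s). Then F'(s) = (k''(s) + (1/2)k(s)³) • N(s). -/
/-- Derivative of the force vector `F = (1/2)k² • T + k' • N` along a curve with
tangent angle `θ`, `θ' = k`: `F' = (k'' + (1/2)k³) • N`. -/
theorem force_derivative
    (θ k k' k'' : ℝ → ℝ)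
    (hθ : ∀ s, HasDerivAt θ (k s) s)
    (hk : ∀ s, HasDerivAt k (k' s) s)
    (hk' : ∀ s, HasDerivAt k' (k'' s) s)
    (T N F : ℝ → ℝ × ℝ)
    (hT : ∀ s, T s = (-Real.sin (θ s), Real.cos (θ s)))
    (hN : ∀ s, N s = (-Real.cos (θ s), -Real.sin (θ s)))
    (hF : ∀ s, F s = ((1/2) * (k s)^2) • T s + (k' s) • N s) :
    ∀ s, HasDerivAt F ((k'' s + (1/2) * (k s)^3) • N s) s := by
  intro s
  have hFfun : F = fun t => ((1/2) * (k t)^2) • (-Real.sin (θ t), Real.cos (θ t))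
      + (k' t) • (-Real.cos (θ t), -Real.sin (θ t)) := by
    funext t; rw [hF, hT, hN]
  rw [hFfun, hN]
  have hsin : HasDerivAt (fun t => Real.sin (θ t)) (Real.cos (θ s) * k s) s :=
    (Real.hasDerivAt_sin (θ s)).comp s (hθ s)
  have hcos : HasDerivAt (fun t => Real.cos (θ t)) (-Real.sin (θ s) * k s) s :=
    (Real.hasDerivAt_cos (θ s)).comp s (hθ s)
  have hTprod : HasDerivAt (fun t => ((-Real.sin (θ t), Real.cos (θ t)) : ℝ × ℝ))
      ((-(Real.cos (θ s) * k s), -Real.sin (θ s) * k s)) s :=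
    HasDerivAt.prodMk hsin.neg hcos
  have hNprod : HasDerivAt (fun t => ((-Real.cos (θ t), -Real.sin (θ t)) : ℝ × ℝ))
      ((-(-Real.sin (θ s) * k s), -(Real.cos (θ s) * k s))) s :=
    HasDerivAt.prodMk hcos.neg hsin.neg
  have hc : HasDerivAt (fun t => (1/2) * (k t)^2) ((1/2) * (2 * k s * k' s)) s := by
    have := ((hk s).pow 2).const_mul (1/2); exact this.congr_deriv (by push_cast; ring)
  have h := (hc.smul hTprod).add ((hk' s).smul hNprod)
  refine h.congr_deriv ?_
  apply Prod.ext <;> simp <;> ring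
end

section
/- Suppose k : ℝ → ℝ solves k'' + (1/2)k³ = 0 with k(0) = 1, k'(0) = 0, and θ : ℝ → ℝ solves θ' = k with θ(0) = 0. Then for all s, cos(θ(s)) = k(s)² and sin(θ(s)) = -2 k'(s). -/
/-- For the rectangular elastica base arc: `cos θ = k²` and `sin θ = -2k'`. -/
theorem elastica_angle_identities
    (θ k k' k'' : ℝ → ℝ)
    (hk : ∀ s, HasDerivAt k (k' s) s)
    (hk' : ∀ s, HasDerivAt k' (k'' s) s)
    (hode : ∀ s, k'' s + (1/2) * (k s)^3 = 0)
    (hk0 : k 0 = 1) (hk'0 : k' 0 = 0)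
    (hθ : ∀ s, HasDerivAt θ (k s) s) (hθ0 : θ 0 = 0) :
    ∀ s, Real.cos (θ s) = (k s)^2 ∧ Real.sin (θ s) = -2 * k' s := by
  set g : ℝ → ℝ := fun s =>
    (Real.cos (θ s) - (k s)^2)^2 + (Real.sin (θ s) + 2 * k' s)^2 with hg
  have hgd : ∀ s, HasDerivAt g 0 s := by
    intro s
    have h1 : HasDerivAt (fun s => Real.cos (θ s) - (k s)^2)
        (-Real.sin (θ s) * k s - 2 * k s * k' s) s := by
      have := ((hθ s).cos).fun_sub (((hk s).fun_pow 2))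
      simpa [mul_comm, mul_left_comm, mul_assoc] using this
    have h2 : HasDerivAt (fun s => Real.sin (θ s) + 2 * k' s)
        (Real.cos (θ s) * k s + 2 * k'' s) s := by
      exact ((hθ s).sin).add ((hk' s).const_mul 2)
    have h : HasDerivAt g _ s := ((h1.fun_pow 2).fun_add (h2.fun_pow 2))
    have hode' : k'' s = -(1/2) * (k s)^3 := by linarith [hode s]
    convert h using 1
    rw [hode']
    ring
  have hconst : ∀ s, g s = g 0 := by
    intro s
    have hdiff : Differentiable ℝ g := fun x => (hgd x).differentiableAt
    exact is_const_of_deriv_eq_zero hdiff (fun x => (hgd x).deriv) s 0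
  intro s
  have h0 : g 0 = 0 := by simp [hg, hθ0, hk0, hk'0]
  have hs : g s = 0 := (hconst s).trans h0
  simp only [hg] at hs
  have ha : (Real.cos (θ s) - (k s)^2)^2 = 0 ∧ (Real.sin (θ s) + 2 * k' s)^2 = 0 := by
    constructor <;> nlinarith [sq_nonneg (Real.cos (θ s) - (k s)^2),
      sq_nonneg (Real.sin (θ s) + 2 * k' s)]
  have h1 := pow_eq_zero_iff (n := 2) (by norm_num) |>.mp ha.1
  have h2 := pow_eq_zero_iff (n := 2) (by norm_num) |>.mp ha.2
  constructor <;> linarith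
end

section
/- Let k solve k'' + (1/2)k³ = 0 with k(0) = 1, k'(0) = 0. Then there exists a finite L₀ > 0 such that k(L₀) = -1, k is strictly decreasing on [0, L₀], and L₀ ≤ 2 ∫_{-1}^{1} dκ/√(1 - κ⁴). -/
open Set MeasureTheory intervalIntegral

lemma elastica_aux_integrable :
    IntervalIntegrable (fun κ : ℝ => 1 / Real.sqrt (1 - κ^4)) volume (-1) 1 := by
  have hm : Measurable (fun κ : ℝ => 1 / Real.sqrt (1 - κ^4)) := by
    have h1 : Continuous (fun κ : ℝ => Real.sqrt (1 - κ^4)) := by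
      exact Real.continuous_sqrt.comp (by continuity)
    simpa only [one_div] using (show Measurable fun κ : ℝ => (Real.sqrt (1 - κ^4))⁻¹ from h1.measurable.inv)
  have hmeas : ∀ a b : ℝ, AEStronglyMeasurable (fun κ : ℝ => 1 / Real.sqrt (1 - κ^4))
      (volume.restrict (Set.uIoc a b)) := fun a b => hm.aestronglyMeasurable
  have h01 : IntervalIntegrable (fun κ : ℝ => 1 / Real.sqrt (1 - κ^4)) volume 0 1 := by
    have hdom : IntervalIntegrable (fun x : ℝ => (1 - x) ^ (-(1/2) : ℝ)) volume 0 1 := by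
      have h0 := ((intervalIntegrable_rpow' (a := 0) (b := 1) (r := -(1/2)) (by norm_num)).comp_sub_left 1).symm
      simpa using h0
    refine hdom.mono_fun (hmeas 0 1) ?_
    rw [Set.uIoc_of_le (by norm_num : (0:ℝ) ≤ 1)]
    filter_upwards [ae_restrict_mem measurableSet_Ioc] with x hx
    have hx0 : 0 < x := hx.1
    have hx1 : x ≤ 1 := hx.2
    have h1x : (0:ℝ) ≤ 1 - x := by linarith
    have heq : (1 - x) ^ (-(1/2) : ℝ) = 1 / Real.sqrt (1 - x) := by
      rw [Real.rpow_neg h1x, Real.sqrt_eq_rpow, one_div]; norm_num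
    rw [heq]
    have hle : 1 - x ≤ 1 - x^4 := by
      nlinarith [mul_nonneg (mul_nonneg hx0.le h1x) (by nlinarith [sq_nonneg x] : (0:ℝ) ≤ 1 + x + x^2)]
    have h2 : Real.sqrt (1 - x) ≤ Real.sqrt (1 - x^4) := Real.sqrt_le_sqrt hle
    have hnn1 : (0:ℝ) ≤ 1 / Real.sqrt (1 - x^4) :=
      div_nonneg zero_le_one (Real.sqrt_nonneg _)
    have hnn2 : (0:ℝ) ≤ 1 / Real.sqrt (1 - x) :=
      div_nonneg zero_le_one (Real.sqrt_nonneg _)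
    rw [Real.norm_eq_abs, Real.norm_eq_abs, abs_of_nonneg hnn1, abs_of_nonneg hnn2]
    rcases eq_or_lt_of_le hx1 with h | h
    · subst h; simp
    · have hs : 0 < Real.sqrt (1 - x) := Real.sqrt_pos.2 (by linarith)
      exact one_div_le_one_div_of_le hs h2
  have hm1 : IntervalIntegrable (fun κ : ℝ => 1 / Real.sqrt (1 - κ^4)) volume (-1) 0 := by
    have hdom : IntervalIntegrable (fun x : ℝ => (1 + x) ^ (-(1/2) : ℝ)) volume (-1) 0 := by
      have h0 := (intervalIntegrable_rpow' (a := 0) (b := 1) (r := -(1/2)) (by norm_num)).comp_sub_right (-1)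
      have he : (fun x : ℝ => (x - (-1)) ^ (-(1/2):ℝ)) = fun x : ℝ => (1 + x) ^ (-(1/2):ℝ) := by
        funext x; norm_num [add_comm]
      rw [he] at h0
      simpa using h0
    refine hdom.mono_fun (hmeas (-1) 0) ?_
    rw [Set.uIoc_of_le (by norm_num : (-1:ℝ) ≤ 0)]
    filter_upwards [ae_restrict_mem measurableSet_Ioc] with x hx
    have hx0 : -1 < x := hx.1
    have hx1 : x ≤ 0 := hx.2
    have h1x : (0:ℝ) ≤ 1 + x := by linarith
    have heq : (1 + x) ^ (-(1/2) : ℝ) = 1 / Real.sqrt (1 + x) := by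
      rw [Real.rpow_neg h1x, Real.sqrt_eq_rpow, one_div]; norm_num
    rw [heq]
    have hle : 1 + x ≤ 1 - x^4 := by
      nlinarith [mul_nonneg (mul_nonneg (neg_nonneg.2 hx1) h1x) (by nlinarith [sq_nonneg (2*x - 1)] : (0:ℝ) ≤ 1 - x + x^2)]
    have h2 : Real.sqrt (1 + x) ≤ Real.sqrt (1 - x^4) := Real.sqrt_le_sqrt hle
    have hnn1 : (0:ℝ) ≤ 1 / Real.sqrt (1 - x^4) :=
      div_nonneg zero_le_one (Real.sqrt_nonneg _)
    have hnn2 : (0:ℝ) ≤ 1 / Real.sqrt (1 + x) :=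
      div_nonneg zero_le_one (Real.sqrt_nonneg _)
    rw [Real.norm_eq_abs, Real.norm_eq_abs, abs_of_nonneg hnn1, abs_of_nonneg hnn2]
    have hs : 0 < Real.sqrt (1 + x) := Real.sqrt_pos.2 (by linarith)
    exact one_div_le_one_div_of_le hs h2
  exact hm1.trans h01

section Main

variable (k k' k'' : ℝ → ℝ)
  (hk : ∀ s, HasDerivAt k (k' s) s)
  (hk' : ∀ s, HasDerivAt k' (k'' s) s)
  (hode : ∀ s, k'' s + (1/2) * (k s)^3 = 0)
  (hk0 : k 0 = 1) (hk'0 : k' 0 = 0)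

include hk hk' hode hk0 hk'0

theorem elastica_main :
    ∃ L₀ : ℝ, 0 < L₀ ∧ k L₀ = -1 ∧ StrictAntiOn k (Set.Icc 0 L₀) ∧ (∀ s ∈ Set.Ioo 0 L₀, k' s < 0) := by
  have hkc : Continuous k := continuous_iff_continuousAt.2 fun s => (hk s).continuousAt
  have hk'c : Continuous k' := continuous_iff_continuousAt.2 fun s => (hk' s).continuousAt
  have hk''eq : ∀ s, k'' s = -(1/2) * (k s)^3 := fun s => by linarith [hode s]
  have hk''c : Continuous k'' := by
    have : k'' = fun s => -(1/2) * (k s)^3 := funext hk''eq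
    rw [this]; continuity
  -- energy conservation
  have energy : ∀ s, (k' s)^2 + (1/4) * (k s)^4 = 1/4 := by
    have hEd : ∀ s, HasDerivAt (fun s => (k' s)^2 + (1/4) * (k s)^4) 0 s := by
      intro s
      have h1 := ((hk' s).pow 2).add (((hk s).pow 4).const_mul (1/4))
      refine h1.congr_deriv (Eq.symm ?_)
      push_cast
      linear_combination (-2 * (k' s)) * hode s
    have hconst : ∀ s, (k' s)^2 + (1/4) * (k s)^4 = (k' 0)^2 + (1/4) * (k 0)^4 := by
      intro s
      exact is_const_of_deriv_eq_zero (fun x => (hEd x).differentiableAt)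
        (fun x => (hEd x).deriv) s 0
    intro s
    rw [hconst s, hk0, hk'0]; norm_num
  have hkd : ∀ s, (k' s)^2 = (1 - (k s)^4)/4 := fun s => by linarith [energy s]
  have hk4le : ∀ s, (k s)^4 ≤ 1 := fun s => by nlinarith [energy s, sq_nonneg (k' s)]
  have hklb : ∀ s, -1 ≤ k s := by
    intro s
    nlinarith [hk4le s, sq_nonneg (k s - 1), sq_nonneg (k s + 1), sq_nonneg ((k s)^2 - 1), sq_nonneg ((k s)^2 + 1)]
  have hzero : ∀ s, k' s = 0 → (k s)^4 = 1 := by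
    intro s h; have := hkd s; rw [h] at this; nlinarith
  -- initial negativity of k'
  obtain ⟨ε, hε, hIoc⟩ : ∃ ε > 0, ∀ t ∈ Ioc 0 ε, k' t < 0 := by
    have hU : IsOpen {t : ℝ | k'' t < 0} := isOpen_lt hk''c continuous_const
    have h0U : (0:ℝ) ∈ {t : ℝ | k'' t < 0} := by
      simp only [mem_setOf_eq, hk''eq 0, hk0]; norm_num
    obtain ⟨ε, hε, hball⟩ := Metric.isOpen_iff.1 hU 0 h0U
    refine ⟨ε, hε, fun t ht => ?_⟩
    obtain ⟨ξ, hξ, hslope⟩ := exists_hasDerivAt_eq_slope k' k'' ht.1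
      (hk'c.continuousOn) (fun x _ => hk' x)
    have hξball : ξ ∈ Metric.ball (0:ℝ) ε := by
      rw [Metric.mem_ball, Real.dist_eq, sub_zero, abs_of_pos hξ.1]
      exact lt_of_lt_of_le hξ.2 ht.2
    have hneg := hball hξball
    simp only [mem_setOf_eq] at hneg
    rw [hk'0] at hslope
    have : k' t = k'' ξ * t := by
      rw [hslope, sub_zero, sub_zero]
      exact (div_mul_cancel₀ _ (ne_of_gt ht.1)).symm
    rw [this]
    exact mul_neg_of_neg_of_pos hneg ht.1
  -- sign propagation
  have hneg : ∀ t, 0 < t → (∀ τ, τ ∈ Ioc 0 t → k' τ ≠ 0) → k' t < 0 := by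
    intro t ht hno
    by_contra hge
    push_neg at hge
    have hgt : 0 < k' t := lt_of_le_of_ne hge (fun h => hno t ⟨ht, le_refl t⟩ h.symm)
    by_cases hte : t ≤ ε
    · exact absurd (hIoc t ⟨ht, hte⟩) (by linarith)
    · push_neg at hte
      have hkε : k' ε < 0 := hIoc ε ⟨hε, le_refl ε⟩
      have h0mem : (0:ℝ) ∈ Icc (k' ε) (k' t) := ⟨hkε.le, hgt.le⟩
      obtain ⟨τ, hτmem, hτ⟩ := intermediate_value_Icc hte.le hk'c.continuousOn h0mem
      exact hno τ ⟨lt_of_lt_of_le hε hτmem.1, hτmem.2⟩ hτ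
  -- existence of a zero of k'
  have hex : ∃ t, 0 < t ∧ k' t = 0 := by
    by_contra h
    push_neg at h
    have hneg' : ∀ t, 0 < t → k' t < 0 := fun t ht => hneg t ht (fun τ hτ => h τ hτ.1)
    have hSA : StrictAntiOn k (Ici 0) := by
      apply strictAntiOn_of_deriv_neg (convex_Ici 0) hkc.continuousOn
      intro x hx
      rw [interior_Ici] at hx
      rw [(hk x).deriv]
      exact hneg' x hx
    have hmono : ∀ a b : ℝ, 0 ≤ a → a ≤ b → k b ≤ k a := by
      intro a b ha hab
      rcases eq_or_lt_of_le hab with rfl | hlt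
      · exact le_refl _
      · exact (hSA ha (by linarith : (0:ℝ) ≤ b) hlt).le
    have hk1 : k 1 < 1 := by
      have := hSA (le_refl (0:ℝ)) (by norm_num : (0:ℝ) ≤ 1) one_pos
      rwa [hk0] at this
    by_cases hcase : ∃ s₁, 1 ≤ s₁ ∧ k s₁ ≤ -1/2
    · obtain ⟨s₁, hs₁, hks₁⟩ := hcase
      set t := s₁ + 16 * (1 - k' s₁) with htdef
      have hk's₁ : k' s₁ < 0 := hneg' s₁ (by linarith)
      have hts₁ : s₁ < t := by rw [htdef]; nlinarith
      obtain ⟨ξ, hξ, hslope⟩ := exists_hasDerivAt_eq_slope k' k'' hts₁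
        (hk'c.continuousOn) (fun x _ => hk' x)
      have hkξ : k ξ ≤ -1/2 := le_trans (hmono s₁ ξ (by linarith) hξ.1.le) hks₁
      have hkξlb := hklb ξ
      have hk''ξ : (1:ℝ)/16 ≤ k'' ξ := by
        rw [hk''eq ξ]
        nlinarith [sq_nonneg (k ξ + 1/2), sq_nonneg (k ξ - 1/2)]
      have hk't : k' t < 0 := hneg' t (by linarith)
      have : k' t - k' s₁ = k'' ξ * (t - s₁) := by
        rw [hslope]
        exact (div_mul_cancel₀ _ (by linarith : t - s₁ ≠ 0)).symm
      nlinarith [this]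
    · push_neg at hcase
      have hk1lb : -1/2 < k 1 := hcase 1 (le_refl 1)
      set m := max ((1/2:ℝ)^4) ((k 1)^4) with hmdef
      have hmlt : m < 1 := by
        apply max_lt (by norm_num)
        nlinarith [mul_pos (show (0:ℝ) < 1 - k 1 by linarith) (show (0:ℝ) < 1 + k 1 by linarith), sq_nonneg (k 1)]
      have hmnn : 0 ≤ m := le_max_of_le_left (by norm_num)
      have hk4m : ∀ t, 1 ≤ t → (k t)^4 ≤ m := by
        intro t ht
        have h1 : k t ≤ k 1 := hmono 1 t (by norm_num) ht
        have h2 : -1/2 < k t := hcase t ht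
        rcases le_total 0 (k t) with hs | hs
        · exact le_max_of_le_right (pow_le_pow_left₀ hs h1 4)
        · refine le_max_of_le_left ?_
          have hx2 : (k t)^2 ≤ 1/4 := by nlinarith
          nlinarith [hx2, sq_nonneg (k t)]
      set δ := Real.sqrt ((1-m)/4) with hδdef
      have hδpos : 0 < δ := Real.sqrt_pos.2 (by linarith)
      have hδsq : δ^2 = (1-m)/4 := Real.sq_sqrt (by linarith)
      have hk'le : ∀ t, 1 ≤ t → k' t ≤ -δ := by
        intro t ht
        have h1 : (k' t)^2 ≥ (1-m)/4 := by
          rw [hkd t]; have := hk4m t ht; linarith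
        have h2 : k' t < 0 := hneg' t (by linarith)
        by_contra hc
        push_neg at hc
        nlinarith
      set T := 1 + 3/δ with hTdef
      have hT1 : 1 < T := by
        rw [hTdef]
        have : 0 < 3/δ := by positivity
        linarith
      obtain ⟨ξ, hξ, hslope⟩ := exists_hasDerivAt_eq_slope k k' hT1
        (hkc.continuousOn) (fun x _ => hk x)
      have hslope2 : k T - k 1 = k' ξ * (T - 1) := by
        rw [hslope]
        exact (div_mul_cancel₀ _ (by linarith : T - 1 ≠ 0)).symm
      have hk'ξ : k' ξ ≤ -δ := hk'le ξ hξ.1.le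
      have hT1' : T - 1 = 3/δ := by rw [hTdef]; ring
      have : k T ≤ k 1 - 3 := by
        have h3 : k' ξ * (T - 1) ≤ -δ * (T - 1) :=
          mul_le_mul_of_nonneg_right hk'ξ (by linarith)
        have h4 : -δ * (T - 1) = -3 := by
          rw [hT1']; field_simp
        linarith [hslope2, h3, h4.symm.le]
      have := hklb T
      linarith
  -- construction of L₀
  obtain ⟨t₁, ht₁pos, ht₁⟩ := hex
  have ht₁ε : ε < t₁ := by
    by_contra hc
    push_neg at hc
    exact absurd ht₁ (ne_of_lt (hIoc t₁ ⟨ht₁pos, hc⟩))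
  set Z := {t : ℝ | ε ≤ t} ∩ {t : ℝ | k' t = 0} with hZdef
  have hZclosed : IsClosed Z := (isClosed_le continuous_const continuous_id).inter
    (isClosed_eq hk'c continuous_const)
  have hZne : Z.Nonempty := ⟨t₁, ht₁ε.le, ht₁⟩
  have hZbdd : BddBelow Z := ⟨ε, fun x hx => hx.1⟩
  set L₀ := sInf Z with hLdef
  have hLmem : L₀ ∈ Z := hZclosed.csInf_mem hZne hZbdd
  have hLpos : 0 < L₀ := lt_of_lt_of_le hε hLmem.1
  have hL'0 : k' L₀ = 0 := hLmem.2
  have hnegL : ∀ τ, 0 < τ → τ < L₀ → k' τ < 0 := by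
    intro τ hτ hτL
    apply hneg τ hτ
    intro σ hσ hσ0
    have hσε : ε ≤ σ := by
      by_contra hc
      push_neg at hc
      exact absurd hσ0 (ne_of_lt (hIoc σ ⟨hσ.1, hc.le⟩))
    have : L₀ ≤ σ := csInf_le hZbdd ⟨hσε, hσ0⟩
    linarith [hσ.2]
  have hSA : StrictAntiOn k (Icc 0 L₀) := by
    apply strictAntiOn_of_deriv_neg (convex_Icc 0 L₀) hkc.continuousOn
    intro x hx
    rw [interior_Icc] at hx
    rw [(hk x).deriv]
    exact hnegL x hx.1 hx.2
  have hkL : k L₀ = -1 := by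
    have h4 : (k L₀)^4 = 1 := hzero L₀ hL'0
    have hlt : k L₀ < 1 := by
      have := hSA (left_mem_Icc.2 hLpos.le) (right_mem_Icc.2 hLpos.le) hLpos
      rwa [hk0] at this
    have hfac : (k L₀ + 1) * ((k L₀ - 1) * ((k L₀)^2 + 1)) = 0 := by
      linear_combination h4
    rcases mul_eq_zero.1 hfac with h | h
    · linarith
    · rcases mul_eq_zero.1 h with h | h
      · linarith
      · nlinarith [sq_nonneg (k L₀)]
  exact ⟨L₀, hLpos, hkL, hSA, fun s hs => hnegL s hs.1 hs.2⟩

end Main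

/-- The elastica curvature reaches `-1` in finite time `L₀`, is strictly decreasing
on `[0, L₀]`, and `L₀ ≤ 2∫_{-1}^{1} dκ/√(1-κ⁴)`. -/
theorem elastica_reaches_minus_one
    (k k' k'' : ℝ → ℝ)
    (hk : ∀ s, HasDerivAt k (k' s) s)
    (hk' : ∀ s, HasDerivAt k' (k'' s) s)
    (hode : ∀ s, k'' s + (1/2) * (k s)^3 = 0)
    (hk0 : k 0 = 1) (hk'0 : k' 0 = 0) :
    ∃ L₀ : ℝ, 0 < L₀ ∧ k L₀ = -1 ∧ StrictAntiOn k (Set.Icc 0 L₀) ∧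
      L₀ ≤ 2 * ∫ κ in (-1:ℝ)..1, 1 / Real.sqrt (1 - κ^4) := by
  obtain ⟨L₀, hLpos, hkL, hSA, hneg⟩ := elastica_main k k' k'' hk hk' hode hk0 hk'0
  refine ⟨L₀, hLpos, hkL, hSA, ?_⟩
  have hkc : Continuous k := continuous_iff_continuousAt.2 fun s => (hk s).continuousAt
  have hk'c : Continuous k' := continuous_iff_continuousAt.2 fun s => (hk' s).continuousAt
  -- energy conservation
  have energy : ∀ s, (k' s)^2 + (1/4) * (k s)^4 = 1/4 := by
    have hEd : ∀ s, HasDerivAt (fun s => (k' s)^2 + (1/4) * (k s)^4) 0 s := by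
      intro s
      have h1 := ((hk' s).pow 2).add (((hk s).pow 4).const_mul (1/4))
      refine h1.congr_deriv (Eq.symm ?_)
      push_cast
      linear_combination (-2 * (k' s)) * hode s
    have hconst : ∀ s, (k' s)^2 + (1/4) * (k s)^4 = (k' 0)^2 + (1/4) * (k 0)^4 := by
      intro s
      exact is_const_of_deriv_eq_zero (fun x => (hEd x).differentiableAt)
        (fun x => (hEd x).deriv) s 0
    intro s
    rw [hconst s, hk0, hk'0]; norm_num
  have hkd : ∀ s, (k' s)^2 = (1 - (k s)^4)/4 := fun s => by linarith [energy s]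
  set G := fun κ : ℝ => 1 / Real.sqrt (1 - κ^4) with hGdef
  have hGnn : ∀ κ, 0 ≤ G κ := fun κ => div_nonneg zero_le_one (Real.sqrt_nonneg _)
  have hGint := elastica_aux_integrable
  have hGcontOn : ContinuousOn G (Ioo (-1:ℝ) 1) := by
    apply ContinuousOn.div continuousOn_const
      ((Real.continuous_sqrt.comp (by continuity : Continuous fun κ : ℝ => 1 - κ^4)).continuousOn)
    intro x hx
    refine ne_of_gt (Real.sqrt_pos.2 ?_)
    show (0:ℝ) < 1 - x^4
    nlinarith [mul_pos (show (0:ℝ) < 1 - x by linarith [hx.2]) (show (0:ℝ) < 1 + x by linarith [hx.1]),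
      sq_nonneg x]
  have key : ∀ e : ℝ, 0 < e → e < L₀/2 → L₀ - 2*e ≤ 2 * ∫ κ in (-1:ℝ)..1, G κ := by
    intro e he heL
    set a := e with hadef
    set b := L₀ - e with hbdef
    have hab : a < b := by rw [hadef, hbdef]; linarith
    have ha0 : 0 < a := he
    have hbL : b < L₀ := by rw [hbdef]; linarith
    have himage : ∀ x ∈ Icc a b, k x ∈ Ioo (-1:ℝ) 1 := by
      intro x hx
      have hx0 : 0 < x := lt_of_lt_of_le ha0 hx.1
      have hxL : x < L₀ := lt_of_le_of_lt hx.2 hbL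
      constructor
      · have := hSA (Set.mem_Icc.2 ⟨hx0.le, hxL.le⟩) (Set.mem_Icc.2 ⟨hLpos.le, le_refl _⟩) hxL
        rwa [hkL] at this
      · have := hSA (Set.mem_Icc.2 ⟨le_refl _, hLpos.le⟩) (Set.mem_Icc.2 ⟨hx0.le, hxL.le⟩) hx0
        rwa [hk0] at this
    have himsub : k '' Set.uIcc a b ⊆ Ioo (-1:ℝ) 1 := by
      rintro _ ⟨x, hx, rfl⟩
      exact himage x (by rwa [Set.uIcc_of_le hab.le] at hx)
    have hsub := intervalIntegral.integral_comp_mul_deriv' (a := a) (b := b)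
      (f := k) (f' := k') (g := G)
      (fun x _ => hk x) hk'c.continuousOn (hGcontOn.mono himsub)
    have hptwise : ∀ x ∈ Set.uIcc a b, (G ∘ k) x * k' x = -(1/2) := by
      intro x hx
      rw [Set.uIcc_of_le hab.le] at hx
      have hx0 : 0 < x := lt_of_lt_of_le ha0 hx.1
      have hxL : x < L₀ := lt_of_le_of_lt hx.2 hbL
      have hk'neg : k' x < 0 := hneg x ⟨hx0, hxL⟩
      have h4 : 1 - (k x)^4 = (-2 * k' x)^2 := by nlinarith [hkd x]
      have hsq : Real.sqrt (1 - (k x)^4) = -2 * k' x := by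
        rw [h4]; exact Real.sqrt_sq (by linarith)
      show G (k x) * k' x = -(1/2)
      rw [hGdef]
      simp only
      rw [hsq]
      have hne : k' x ≠ 0 := ne_of_lt hk'neg
      field_simp
    have hLHS : (∫ x in a..b, (G ∘ k) x * k' x) = (b - a) * (-(1/2)) := by
      rw [intervalIntegral.integral_congr (g := fun _ => -(1/2)) hptwise]
      rw [intervalIntegral.integral_const]
      simp [smul_eq_mul]
    have hval : (∫ x in k b..k a, G x) = (b - a) / 2 := by
      have h1 : (∫ x in k a..k b, G x) = (b - a) * (-(1/2)) := by rw [← hsub, hLHS]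
      have h2 := intervalIntegral.integral_symm (μ := volume) (k a) (k b) (f := G)
      rw [h1] at h2
      rw [h2]; ring
    have hmono : (∫ x in k b..k a, G x) ≤ ∫ x in (-1:ℝ)..1, G x := by
      have hkab : k b ≤ k a := by
        refine (hSA (Set.mem_Icc.2 ⟨ha0.le, by linarith⟩)
          (Set.mem_Icc.2 ⟨by linarith, hbL.le⟩) hab).le
      refine intervalIntegral.integral_mono_interval
        (himage b (Set.mem_Icc.2 ⟨hab.le, le_refl _⟩)).1.le hkab
        (himage a (Set.mem_Icc.2 ⟨le_refl _, hab.le⟩)).2.le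
        (Filter.Eventually.of_forall fun x => hGnn x) hGint
    rw [hval] at hmono
    rw [hbdef, hadef] at hmono
    linarith
  refine le_of_forall_pos_le_add ?_
  intro η hη
  set e := min (η/2) (L₀/4) with hedef
  have he : 0 < e := lt_min (by linarith) (by linarith)
  have heL : e < L₀/2 := lt_of_le_of_lt (min_le_right _ _) (by linarith)
  have hk1 := key e he heL
  have h2e : 2*e ≤ η := by
    have := min_le_left (η/2) (L₀/4)
    rw [hedef]
    linarith
  linarith
end

section
/- Let k solve k'' + (1/2)k³ = 0 with k(0)=1, k'(0)=0, let θ solve θ' = k with θ(0)=0, and let L₀ be the first time k reaches -1. Then k'(L₀) = 0 and θ(L₀) = 0. -/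
open Set Real

set_option maxHeartbeats 1000000

/-- At the first time `L₀` the elastica curvature `k` reaches `-1`, one has
`k'(L₀) = 0` and `θ(L₀) = 0`. -/
theorem elastica_halfperiod_endpoint
    (θ k k' k'' : ℝ → ℝ)
    (hk : ∀ s, HasDerivAt k (k' s) s)
    (hk' : ∀ s, HasDerivAt k' (k'' s) s)
    (hode : ∀ s, k'' s + (1/2) * (k s)^3 = 0)
    (hk0 : k 0 = 1) (hk'0 : k' 0 = 0)
    (hθ : ∀ s, HasDerivAt θ (k s) s) (hθ0 : θ 0 = 0)
    (L₀ : ℝ) (hL₀pos : 0 < L₀) (hkL₀ : k L₀ = -1)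
    (hfirst : ∀ s, 0 < s → s < L₀ → k s ≠ -1) :
    k' L₀ = 0 ∧ θ L₀ = 0 := by
  -- Energy conservation: E = k'^2 + (1/4) k^4 is constant.
  set E : ℝ → ℝ := fun s => (k' s)^2 + (1/4) * (k s)^4 with hEdef
  have hE : ∀ s, HasDerivAt E 0 s := by
    intro s
    have h1 : HasDerivAt (fun s => (k' s)^2 + (1/4) * (k s)^4)
        (2 * (k' s) ^ 1 * k'' s + (1/4) * (4 * (k s)^3 * k' s)) s := by
      exact (((hk' s).pow 2)).add (((hk s).pow 4).const_mul (1/4))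
    convert h1 using 1
    have h2 : k'' s = -(1/2) * (k s)^3 := by linarith [hode s]
    rw [h2]; ring
  have hEconst : ∀ x ∈ Icc (0:ℝ) L₀, E x = E 0 := by
    refine constant_of_has_deriv_right_zero (fun x _ => (hE x).continuousAt.continuousWithinAt)
      (fun x _ => (hE x).hasDerivWithinAt)
  have hEL : E L₀ = E 0 := hEconst L₀ ⟨le_of_lt hL₀pos, le_refl _⟩
  have hk'L : k' L₀ = 0 := by
    have : (k' L₀)^2 = 0 := by
      simp only [hEdef] at hEL
      rw [hkL₀, hk0, hk'0] at hEL
      nlinarith [hEL]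
    exact pow_eq_zero_iff two_ne_zero |>.mp this
  refine ⟨hk'L, ?_⟩
  -- Bound on k over [0, L₀]
  have hkc : Continuous k := by
    apply continuous_iff_continuousAt.2
    exact fun s => (hk s).continuousAt
  obtain ⟨M, hM⟩ : ∃ M, ∀ x ∈ Icc (0:ℝ) L₀, |k x| ≤ M :=
    (isCompact_Icc.exists_bound_of_continuousOn hkc.continuousOn).imp
      (fun M h x hx => h x hx)
  -- The reflected difference
  set u : ℝ → ℝ := fun s => k s + k (L₀ - s) with hudef
  set v : ℝ → ℝ := fun s => k' s - k' (L₀ - s) with hvdef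
  have hrefl : ∀ s, HasDerivAt (fun t => L₀ - t) (-1) s := fun s => by
    simpa using (hasDerivAt_id s).const_sub L₀
  have hu : ∀ s, HasDerivAt u (v s) s := by
    intro s
    have h2 : HasDerivAt (fun t => k (L₀ - t)) (k' (L₀ - s) * (-1)) s :=
      (hk (L₀ - s)).comp s (hrefl s)
    have : HasDerivAt u (k' s + k' (L₀ - s) * (-1)) s := (hk s).add h2
    convert this using 1
    simp [hvdef]; ring
  have hv : ∀ s, HasDerivAt v (k'' s + k'' (L₀ - s)) s := by
    intro s
    have h2 : HasDerivAt (fun t => k' (L₀ - t)) (k'' (L₀ - s) * (-1)) s :=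
      (hk' (L₀ - s)).comp s (hrefl s)
    have : HasDerivAt v (k'' s - k'' (L₀ - s) * (-1)) s := (hk' s).sub h2
    convert this using 1
    ring
  set C : ℝ := 2 + 3 * M^2 with hCdef
  set W : ℝ → ℝ := fun s => Real.exp (-(C * s)) * ((u s)^2 + (v s)^2) with hWdef
  have hW : ∀ s, HasDerivAt W
      (Real.exp (-(C * s)) * (-C) * ((u s)^2 + (v s)^2)
        + Real.exp (-(C * s)) * (2 * (u s)^1 * v s + 2 * (v s)^1 * (k'' s + k'' (L₀ - s)))) s := by
    intro s
    have he : HasDerivAt (fun t => Real.exp (-(C * t))) (Real.exp (-(C * s)) * (-C)) s := by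
      have : HasDerivAt (fun t : ℝ => -(C * t)) (-C) s := by
        exact ((hasDerivAt_id s).const_mul C).neg.congr_deriv (by ring)
      simpa [mul_comm] using this.exp
    exact he.mul (((hu s).pow 2).add ((hv s).pow 2))
  have hWd : ∀ s ∈ Icc (0:ℝ) L₀, deriv W s ≤ 0 := by
    intro s hs
    rw [(hW s).deriv]
    have hs' : L₀ - s ∈ Icc (0:ℝ) L₀ := ⟨by linarith [hs.2], by linarith [hs.1]⟩
    have ha := hM s hs
    have hb := hM (L₀ - s) hs'
    have ha' := abs_le.1 ha
    have hb' := abs_le.1 hb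
    set a := k s
    set b := k (L₀ - s)
    have hka : k'' s = -(1/2) * a^3 := by have := hode s; linarith
    have hkb : k'' (L₀ - s) = -(1/2) * b^3 := by have := hode (L₀ - s); linarith
    rw [hka, hkb]
    have hQ1 : 0 ≤ a^2 - a*b + b^2 := by nlinarith [sq_nonneg (a - b), sq_nonneg (a + b)]
    have hQ2 : a^2 - a*b + b^2 ≤ 3 * M^2 := by nlinarith [sq_nonneg (a - b), sq_nonneg (a + b), ha'.1, ha'.2, hb'.1, hb'.2, abs_nonneg a]
    have hexp : 0 < Real.exp (-(C * s)) := Real.exp_pos _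
    have husv : u s = a + b := rfl
    have key : 2 * (u s)^1 * v s + 2 * (v s)^1 * (-(1/2) * a^3 + -(1/2) * b^3)
        ≤ C * ((u s)^2 + (v s)^2) := by
      have hcube : a^3 + b^3 = (a + b) * (a^2 - a*b + b^2) := by ring
      rw [hCdef]
      have h1 : 2 * (u s) * v s ≤ (u s)^2 + (v s)^2 := by nlinarith [sq_nonneg (u s - v s)]
      have hM2 : (0:ℝ) ≤ 3 * M^2 := by positivity
      have h2 : -((u s) * v s * (a^2 - a*b + b^2)) ≤ 3 * M^2 * ((u s)^2 + (v s)^2) := by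
        have hw : (0:ℝ) ≤ (u s)^2 + (v s)^2 := by positivity
        rcases le_or_gt 0 (u s * v s) with ht | ht
        · have e1 : 0 ≤ (u s * v s) * (a^2 - a*b + b^2) := mul_nonneg ht hQ1
          have e2 : 0 ≤ 3 * M^2 * ((u s)^2 + (v s)^2) := mul_nonneg hM2 hw
          linarith
        · have e1 : 0 ≤ (-(u s * v s)) * (3 * M^2 - (a^2 - a*b + b^2)) :=
            mul_nonneg (by linarith) (by linarith)
          have e2 : 0 ≤ 3 * M^2 * ((u s + v s)^2) := mul_nonneg hM2 (sq_nonneg _)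
          have e3 : 0 ≤ 3 * M^2 * ((u s)^2 + (v s)^2) := mul_nonneg hM2 hw
          nlinarith [e1, e2, e3]
      have lhs_eq : 2 * (u s)^1 * v s + 2 * (v s)^1 * (-(1/2) * a^3 + -(1/2) * b^3)
          = 2 * (u s) * v s + (-((u s) * v s * (a^2 - a*b + b^2))) := by
        rw [husv]; ring
      rw [lhs_eq]
      have hw' : (0:ℝ) ≤ (u s)^2 + (v s)^2 := by positivity
      linarith [h1, h2, hw', mul_nonneg hM2 hw']
    have h3 := mul_le_mul_of_nonneg_left key (le_of_lt hexp)
    have h4 : Real.exp (-(C * s)) * (-C) * ((u s)^2 + (v s)^2)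
        + Real.exp (-(C * s)) * (C * ((u s)^2 + (v s)^2)) = 0 := by ring
    linarith [h3, h4]
  have hWanti : AntitoneOn W (Icc 0 L₀) := by
    apply antitoneOn_of_deriv_nonpos (convex_Icc 0 L₀)
      (fun x _ => (hW x).continuousAt.continuousWithinAt)
      (fun x hx => ((hW x).differentiableAt).differentiableWithinAt)
    intro x hx
    rw [interior_Icc] at hx
    exact hWd x ⟨le_of_lt hx.1, le_of_lt hx.2⟩
  have hW0 : W 0 = 0 := by
    simp only [hWdef, hudef, hvdef, sub_zero]
    rw [hk0, hkL₀, hk'0, hk'L]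
    norm_num
  have huzero : ∀ s ∈ Icc (0:ℝ) L₀, u s = 0 := by
    intro s hs
    have h1 : W s ≤ W 0 := hWanti (left_mem_Icc.2 (le_of_lt hL₀pos)) hs hs.1
    have h2 : 0 ≤ W s := by
      have := Real.exp_pos (-(C * s))
      have := sq_nonneg (u s)
      have := sq_nonneg (v s)
      simp only [hWdef]
      positivity
    have hWs : W s = 0 := le_antisymm (hW0 ▸ h1) h2
    simp only [hWdef] at hWs
    have hexp : Real.exp (-(C * s)) ≠ 0 := (Real.exp_pos _).ne'
    have hsum : (u s)^2 + (v s)^2 = 0 := by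
      rcases mul_eq_zero.1 hWs with h | h
      · exact absurd h hexp
      · exact h
    nlinarith [sq_nonneg (u s), sq_nonneg (v s), hsum]
  -- Now θ(L₀-s) - θ(s) is constant on [0, L₀]
  set h : ℝ → ℝ := fun s => θ (L₀ - s) - θ s with hhdef
  have hh : ∀ s, HasDerivAt h (-(u s)) s := by
    intro s
    have h2 : HasDerivAt (fun t => θ (L₀ - t)) (k (L₀ - s) * (-1)) s :=
      (hθ (L₀ - s)).comp s (hrefl s)
    have : HasDerivAt h (k (L₀ - s) * (-1) - k s) s := h2.sub (hθ s)
    convert this using 1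
    simp [hudef]; ring
  have hconst : ∀ x ∈ Icc (0:ℝ) L₀, h x = h 0 :=
    constant_of_has_deriv_right_zero
      (fun x _ => (hh x).continuousAt.continuousWithinAt)
      (fun x hx => by
        have hu0 : u x = 0 := huzero x ⟨hx.1, le_of_lt hx.2⟩
        have := (hh x).hasDerivWithinAt (s := Ici x)
        rwa [hu0, neg_zero] at this)
  have := hconst L₀ ⟨le_of_lt hL₀pos, le_refl _⟩
  simp only [hhdef, sub_self] at this
  rw [hθ0] at this
  simp at this
  linarith [this]
end
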